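/- If two quadratic MRS functions in n variables are affine equivalent, then there is a permutation of the n variables which gives the equivalence; that is, if f_{n,r} and f_{n,s} (with 2 ≤ r, s ≤ ⌊(n+1)/2⌋, or the short quadratic function when n is even) are affine equivalent, then there exists a permutation ξ of {1,...,n} such that f_{n,s}(x_1,...,x_n) = f_{n,r}(x_{ξ(1)},...,x_{ξ(n)}). -/

import Mathlib

/-- Boolean functions in `n` variables, with variables indexed by `ZMod n`
(index `i : ZMod n` corresponds to the variable `x_{i+1}` in 1-indexed notation). -/
abbrev BF (n : ℕ) := (ZMod n → ZMod 2) → ZMod 2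

/-- Affine equivalence of Boolean functions: `g x = f (A x + b)` for some invertible
matrix `A` over `GF(2)` and some vector `b`. -/
def affEquiv {n : ℕ} [NeZero n] (f g : BF n) : Prop :=
  ∃ (A : Matrix (ZMod n) (ZMod n) (ZMod 2)) (b : ZMod n → ZMod 2),
    IsUnit A ∧ ∀ x, g x = f (A.mulVec x + b)

/-- The quadratic MRS function `f_{n,j}(x) = Σ_{i=1}^n x_i x_{(i+j-1) Mod n}`. -/
def quadMRS (n : ℕ) [NeZero n] (j : ℕ) : BF n :=
  fun x => ∑ i : ZMod n, x i * x (i + ((j - 1 : ℕ) : ZMod n))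

/-- The short quadratic function `Σ_{i=1}^{n/2} x_i x_{i+n/2}` (for even `n`). -/
def shortQuad (n : ℕ) [NeZero n] : BF n :=
  fun x => ∑ i ∈ Finset.range (n / 2),
    x ((i : ℕ) : ZMod n) * x (((i : ℕ) : ZMod n) + ((n / 2 : ℕ) : ZMod n))

/-- `f` is a quadratic MRS function in `n` variables: either `f_{n,j}` for some
`2 ≤ j ≤ ⌊(n+1)/2⌋`, or (for even `n`) the short quadratic function. -/
def IsQuadMRS (n : ℕ) [NeZero n] (f : BF n) : Prop :=
  (∃ j : ℕ, 2 ≤ j ∧ j ≤ (n + 1) / 2 ∧ f = quadMRS n j) ∨ (Even n ∧ f = shortQuad n)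

namespace MRSAux

lemma z2_add_self (a : ZMod 2) : a + a = 0 := by revert a; decide
lemma z2_add_eq_zero {a b : ZMod 2} : a + b = 0 ↔ a = b := by revert a b; decide
lemma z2_mul_self (a : ZMod 2) : a * a = a := by revert a; decide

variable {n : ℕ} [NeZero n]

/-- quadratic function with shift `s` -/
def Qs (n : ℕ) [NeZero n] (s : ZMod n) : BF n := fun x => ∑ i : ZMod n, x i * x (i + s)

lemma Qs_zero (s : ZMod n) : Qs n s 0 = 0 := by simp [Qs]

/-- set of `v` whose derivative `f(x+v)+f(x)` is constant -/
def Cset (f : BF n) : Finset (ZMod n → ZMod 2) :=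
  Finset.univ.filter fun v => ∀ x y, f (x + v) + f x = f (y + v) + f y

/-- set of `v` whose derivative is zero -/
def Zset (f : BF n) : Finset (ZMod n → ZMod 2) :=
  Finset.univ.filter fun v => ∀ x, f (x + v) = f x

lemma mem_Cset {f : BF n} {v} : v ∈ Cset f ↔ ∀ x y, f (x + v) + f x = f (y + v) + f y := by
  simp [Cset]

lemma mem_Zset {f : BF n} {v} : v ∈ Zset f ↔ ∀ x, f (x + v) = f x := by simp [Zset]

lemma Zset_subset_Cset {f : BF n} : Zset f ⊆ Cset f := by
  intro v hv
  rw [mem_Zset] at hv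
  rw [mem_Cset]
  intro x y
  rw [hv x, hv y, z2_add_self, z2_add_self]

/-- derivative formula for `Qs` -/
lemma Qs_deriv (s : ZMod n) (x v : ZMod n → ZMod 2) :
    Qs n s (x + v) + Qs n s x
      = (∑ i : ZMod n, x i * (v (i + s) + v (i - s))) + Qs n s v := by
  have e1 : Qs n s (x + v)
      = Qs n s x + ((∑ i : ZMod n, x i * v (i + s)) + ((∑ i : ZMod n, v i * x (i + s))
          + Qs n s v)) := by
    simp only [Qs, Pi.add_apply]
    rw [← Finset.sum_add_distrib, ← Finset.sum_add_distrib, ← Finset.sum_add_distrib]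
    exact Finset.sum_congr rfl (fun i _ => by ring)
  have e2 : (∑ i : ZMod n, v i * x (i + s)) = ∑ i : ZMod n, x i * v (i - s) := by
    apply Fintype.sum_equiv (Equiv.addRight s)
    intro j
    simp [mul_comm]
  rw [e1, e2]
  have : ∀ a b c d : ZMod 2, (a + (b + (c + d))) + a = (b + c) + d := by decide
  rw [this]
  rw [← Finset.sum_add_distrib]
  congr 1
  exact Finset.sum_congr rfl (fun i _ => by ring)

lemma mem_Cset_Qs {s : ZMod n} {v : ZMod n → ZMod 2} :
    v ∈ Cset (Qs n s) ↔ ∀ i, v (i + s) = v (i - s) := by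
  rw [mem_Cset]
  constructor
  · intro hv k
    have h0 : ∀ x, Qs n s (x + v) + Qs n s x = Qs n s v := by
      intro x
      have := hv x 0
      rwa [zero_add, Qs_zero, add_zero] at this
    have h1 : ∀ x : ZMod n → ZMod 2, (∑ i : ZMod n, x i * (v (i + s) + v (i - s))) = 0 := by
      intro x
      have h2 := (Qs_deriv s x v).symm.trans (h0 x)
      exact add_eq_right.mp h2
    have h3 := h1 (Pi.single k 1)
    rw [Finset.sum_eq_single k] at h3
    · rw [Pi.single_eq_same, one_mul] at h3
      exact z2_add_eq_zero.mp h3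
    · intro i _ hik
      rw [Pi.single_eq_of_ne hik, zero_mul]
    · intro habs
      exact absurd (Finset.mem_univ k) habs
  · intro hv x y
    have hz : ∀ z : ZMod n → ZMod 2,
        (∑ i : ZMod n, z i * (v (i + s) + v (i - s))) = 0 := fun z =>
      Finset.sum_eq_zero fun i _ => by rw [hv i, z2_add_self, mul_zero]
    rw [Qs_deriv, Qs_deriv, hz, hz]


/-- the subgroup of periods of a function on `ZMod n` -/
def periods (v : ZMod n → ZMod 2) : AddSubgroup (ZMod n) where
  carrier := {c | ∀ i, v (i + c) = v i}
  zero_mem' := by intro i; rw [add_zero]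
  add_mem' := by
    intro a b ha hb i
    rw [← add_assoc]
    rw [hb (i + a), ha i]
  neg_mem' := by
    intro a ha i
    have h2 := ha (i + -a)
    rw [add_assoc, neg_add_cancel, add_zero] at h2
    exact h2.symm

lemma mem_periods {v : ZMod n → ZMod 2} {c : ZMod n} :
    c ∈ periods v ↔ ∀ i, v (i + c) = v i := Iff.rfl

lemma natCast_gcd_mem_periods {v : ZMod n → ZMod 2} {k : ℕ}
    (h : ((k : ℕ) : ZMod n) ∈ periods v) : ((n.gcd k : ℕ) : ZMod n) ∈ periods v := by
  have hcast : ((n.gcd k : ℕ) : ZMod n) = (n.gcd k : ℤ) := by push_cast; ring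
  have hbez : ((n.gcd k : ℤ) : ZMod n) = ((n * n.gcdA k + k * n.gcdB k : ℤ) : ZMod n) := by
    rw [← Nat.gcd_eq_gcd_ab]
  have : ((n.gcd k : ℕ) : ZMod n) = (n.gcdB k) • ((k : ℕ) : ZMod n) := by
    rw [hcast, hbez]
    push_cast
    rw [ZMod.natCast_self]
    rw [zsmul_eq_mul]
    push_cast
    ring
  rw [this]
  exact zsmul_mem h _

lemma natCast_mem_periods_of_dvd {v : ZMod n → ZMod 2} {a b : ℕ}
    (hab : a ∣ b) (h : ((a : ℕ) : ZMod n) ∈ periods v) : ((b : ℕ) : ZMod n) ∈ periods v := by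
  obtain ⟨e, rfl⟩ := hab
  have : ((a * e : ℕ) : ZMod n) = e • ((a : ℕ) : ZMod n) := by
    push_cast; rw [nsmul_eq_mul]; ring
  rw [this]
  exact nsmul_mem h _

/-- sum over `ZMod n` as a sum over `range n` -/
lemma sum_zmod_eq_sum_range {M : Type*} [AddCommMonoid M] (F : ZMod n → M) :
    ∑ i : ZMod n, F i = ∑ i ∈ Finset.range n, F ((i : ℕ) : ZMod n) := by
  apply Finset.sum_nbij' (fun a => a.val) (fun i => ((i : ℕ) : ZMod n))
  · intro a _
    exact Finset.mem_range.mpr (ZMod.val_lt a)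
  · intro i _
    exact Finset.mem_univ _
  · intro a _
    exact ZMod.natCast_rightInverse a
  · intro i hi
    exact ZMod.val_natCast_of_lt (Finset.mem_range.mp hi)
  · intro a _
    rw [ZMod.natCast_rightInverse a]

lemma periodic_step {v : ZMod n → ZMod 2} {k : ℕ}
    (h : ((k : ℕ) : ZMod n) ∈ periods v) (q r : ℕ) :
    v (((q * k + r : ℕ) : ZMod n)) = v ((r : ℕ) : ZMod n) := by
  induction q with
  | zero => simp
  | succ q ih =>
    have : ((q + 1) * k + r : ℕ) = (q * k + r) + k := by ring
    rw [this]
    push_cast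
    rw [h]
    push_cast at ih
    exact ih

/-- if `a` is `k`-periodic and `n/k` is even then the total sum vanishes -/
lemma sum_eq_zero_of_periodic {a : ZMod n → ZMod 2} {k : ℕ} (hk : k ∣ n) (hk0 : k ≠ 0)
    (hper : ((k : ℕ) : ZMod n) ∈ periods a) (heven : 2 ∣ n / k) :
    ∑ i : ZMod n, a i = 0 := by
  rw [sum_zmod_eq_sum_range]
  have hbij : ∑ i ∈ Finset.range n, a ((i : ℕ) : ZMod n)
      = ∑ p ∈ (Finset.range (n / k)) ×ˢ (Finset.range k), a (((p.1 * k + p.2 : ℕ) : ZMod n)) := by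
    apply Finset.sum_nbij' (fun i => (i / k, i % k)) (fun p => p.1 * k + p.2)
    · intro i hi
      rw [Finset.mem_product]
      constructor
      · exact Finset.mem_range.mpr (Nat.div_lt_div_of_lt_of_dvd hk (Finset.mem_range.mp hi))
      · exact Finset.mem_range.mpr (Nat.mod_lt _ (Nat.pos_of_ne_zero hk0))
    · intro p hp
      rw [Finset.mem_product] at hp
      have h1 := Finset.mem_range.mp hp.1
      have h2 := Finset.mem_range.mp hp.2
      rw [Finset.mem_range]
      calc p.1 * k + p.2 < p.1 * k + k := by omega
        _ = (p.1 + 1) * k := by ring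
        _ ≤ (n / k) * k := Nat.mul_le_mul_right k h1
        _ = n := Nat.div_mul_cancel hk
    · intro i _
      show i / k * k + i % k = i
      rw [mul_comm]
      exact Nat.div_add_mod i k
    · intro p hp
      rw [Finset.mem_product] at hp
      have h2 := Finset.mem_range.mp hp.2
      obtain ⟨p1, p2⟩ := p
      simp only at h2 ⊢
      have e1 : p1 * k + p2 = p2 + p1 * k := by ring
      rw [e1]
      refine Prod.ext ?_ ?_
      · simp only
        rw [Nat.add_mul_div_right _ _ (Nat.pos_of_ne_zero hk0), Nat.div_eq_of_lt h2, zero_add]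
      · simp only
        rw [Nat.add_mul_mod_self_right, Nat.mod_eq_of_lt h2]
    · intro i _
      have hdm : i / k * k + i % k = i := by rw [mul_comm]; exact Nat.div_add_mod i k
      show a ((i : ℕ) : ZMod n) = a (((i / k * k + i % k : ℕ) : ZMod n))
      rw [hdm]
  rw [hbij]
  rw [Finset.sum_product]
  have hconst : ∀ q ∈ Finset.range (n / k), (∑ r ∈ Finset.range k, a (((q * k + r : ℕ) : ZMod n)))
      = ∑ r ∈ Finset.range k, a ((r : ℕ) : ZMod n) :=
    fun q _ => Finset.sum_congr rfl fun r _ => periodic_step hper q r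
  rw [Finset.sum_congr rfl hconst, Finset.sum_const, Finset.card_range]
  obtain ⟨e, he⟩ := heven
  rw [he, mul_comm, mul_smul, two_smul, z2_add_self, smul_zero]

lemma shift_iff {s : ZMod n} {v : ZMod n → ZMod 2} :
    (∀ i, v (i + s) = v (i - s)) ↔ (s + s) ∈ periods v := by
  constructor
  · intro h i
    have h2 := h (i + s)
    rw [add_sub_cancel_right] at h2
    rw [← add_assoc]
    exact h2
  · intro h i
    have h2 := h (i - s)
    have e : i - s + (s + s) = i + s := by ring
    rw [e] at h2
    exact h2

lemma mem_Cset_Qs_iff_periods {t : ℕ} {v : ZMod n → ZMod 2} :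
    v ∈ Cset (Qs n ((t : ℕ) : ZMod n)) ↔ ((2 * t : ℕ) : ZMod n) ∈ periods v := by
  rw [mem_Cset_Qs, shift_iff]
  have e : (((t : ℕ) : ZMod n) + ((t : ℕ) : ZMod n)) = ((2 * t : ℕ) : ZMod n) := by
    push_cast; ring
  rw [e]

lemma card_Cset_Qs (t : ℕ) :
    (Cset (Qs n ((t : ℕ) : ZMod n))).card = 2 ^ (n.gcd (2 * t)) := by
  set G := n.gcd (2 * t) with hG
  have hG0 : G ≠ 0 := fun h => (NeZero.ne n) (Nat.eq_zero_of_gcd_eq_zero_left h)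
  haveI : NeZero G := ⟨hG0⟩
  have hGn : G ∣ n := Nat.gcd_dvd_left n (2 * t)
  have hG2t : G ∣ 2 * t := Nat.gcd_dvd_right n (2 * t)
  have hcard : (Cset (Qs n ((t : ℕ) : ZMod n))).card
      = (Finset.univ : Finset (ZMod G → ZMod 2)).card := by
    apply Finset.card_nbij' (fun v => fun j : ZMod G => v ((j.val : ℕ) : ZMod n))
      (fun w => fun i => w (ZMod.castHom hGn (ZMod G) i))
    · intro v _; exact Finset.mem_univ _
    · intro w _
      rw [Finset.mem_coe, mem_Cset_Qs_iff_periods]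
      intro i
      show w (ZMod.castHom hGn (ZMod G) (i + _)) = w (ZMod.castHom hGn (ZMod G) i)
      congr 1
      rw [map_add]
      have hz : (ZMod.castHom hGn (ZMod G)) ((2 * t : ℕ) : ZMod n) = 0 := by
        rw [map_natCast]
        exact (ZMod.natCast_eq_zero_iff _ _).mpr hG2t
      rw [hz, add_zero]
    · intro v hv
      rw [Finset.mem_coe, mem_Cset_Qs_iff_periods] at hv
      have hper : ((G : ℕ) : ZMod n) ∈ periods v := natCast_gcd_mem_periods hv
      funext i
      show v ((((ZMod.castHom hGn (ZMod G)) i).val : ℕ) : ZMod n) = v i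
      have h1 : ((ZMod.castHom hGn (ZMod G)) i).val = i.val % G := by
        rw [ZMod.castHom_apply, ← ZMod.natCast_val i, ZMod.val_natCast]
      rw [h1]
      have h2 := periodic_step hper (i.val / G) (i.val % G)
      have h3 : i.val / G * G + i.val % G = i.val := by
        rw [mul_comm]; exact Nat.div_add_mod _ _
      rw [h3, ZMod.natCast_rightInverse i] at h2
      exact h2.symm
    · intro w _
      funext j
      show w (ZMod.castHom hGn (ZMod G) ((j.val : ℕ) : ZMod n)) = w j
      rw [map_natCast]
      have : ((j.val : ℕ) : ZMod G) = j := ZMod.natCast_rightInverse j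
      rw [this]
  rw [hcard, Finset.card_univ, Fintype.card_fun, ZMod.card, ZMod.card]

lemma mem_Zset_iff_Qs {s : ZMod n} {v : ZMod n → ZMod 2} :
    v ∈ Zset (Qs n s) ↔ v ∈ Cset (Qs n s) ∧ Qs n s v = 0 := by
  constructor
  · intro hv
    refine ⟨Zset_subset_Cset hv, ?_⟩
    have h2 := (mem_Zset.mp hv) 0
    rwa [zero_add, Qs_zero] at h2
  · rintro ⟨hc, hz⟩
    rw [mem_Zset]
    intro x
    have h2 := (mem_Cset.mp hc) x 0
    rw [zero_add, Qs_zero, add_zero, hz] at h2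
    exact z2_add_eq_zero.mp h2

lemma gcd_aux (d m t₁ : ℕ) (hcop : m.Coprime t₁) :
    (d * m).gcd (2 * (d * t₁)) = d * (m.gcd 2) := by
  rw [show 2 * (d * t₁) = d * (2 * t₁) by ring, Nat.gcd_mul_left]
  congr 1
  exact Nat.Coprime.gcd_mul_right_cancel_right 2 hcop.symm

lemma gcd_two_mul (t : ℕ) :
    n.gcd (2 * t) = n.gcd t * ((n / n.gcd t).gcd 2) := by
  have hd0 : 0 < n.gcd t :=
    Nat.gcd_pos_of_pos_left t (Nat.pos_of_ne_zero (NeZero.ne n))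
  have hdn : n.gcd t ∣ n := Nat.gcd_dvd_left n t
  have hdt : n.gcd t ∣ t := Nat.gcd_dvd_right n t
  have hcop : (n / n.gcd t).Coprime (t / n.gcd t) := Nat.coprime_div_gcd_div_gcd hd0
  calc n.gcd (2 * t)
      = (n.gcd t * (n / n.gcd t)).gcd (2 * (n.gcd t * (t / n.gcd t))) := by
        rw [Nat.mul_div_cancel' hdn, Nat.mul_div_cancel' hdt]
    _ = n.gcd t * ((n / n.gcd t).gcd 2) := gcd_aux _ _ _ hcop

lemma gcd_two_mul_of_even {t : ℕ} (hm : 2 ∣ n / n.gcd t) :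
    n.gcd (2 * t) = 2 * n.gcd t := by
  rw [gcd_two_mul t, Nat.gcd_eq_right hm]
  ring

lemma gcd_two_mul_of_odd {t : ℕ} (hm : ¬ 2 ∣ n / n.gcd t) :
    n.gcd (2 * t) = n.gcd t := by
  rw [gcd_two_mul t]
  have h2 : (n / n.gcd t).gcd 2 ∣ 2 := Nat.gcd_dvd_right _ _
  rcases (Nat.dvd_prime Nat.prime_two).mp h2 with h | h
  · rw [h, mul_one]
  · exfalso
    exact hm (h ▸ Nat.gcd_dvd_left (n / n.gcd t) 2)

lemma Qs_apply_eq_zero_of_even {t : ℕ} (ht : 1 ≤ t) (hm : 2 ∣ n / n.gcd t)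
    {v : ZMod n → ZMod 2} (hv : v ∈ Cset (Qs n ((t : ℕ) : ZMod n))) :
    Qs n ((t : ℕ) : ZMod n) v = 0 := by
  set d := n.gcd t with hd
  have hdn : d ∣ n := Nat.gcd_dvd_left n t
  have hdt : d ∣ t := Nat.gcd_dvd_right n t
  have hd0 : d ≠ 0 := by
    intro h
    exact (NeZero.ne n) (Nat.eq_zero_of_gcd_eq_zero_left h)
  have hG : n.gcd (2 * t) = 2 * d := gcd_two_mul_of_even hm
  have hper2t : ((2 * t : ℕ) : ZMod n) ∈ periods v := mem_Cset_Qs_iff_periods.mp hv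
  have hperG : ((2 * d : ℕ) : ZMod n) ∈ periods v := by
    rw [← hG]; exact natCast_gcd_mem_periods hper2t
  have hcop : (n / d).Coprime (t / d) :=
    Nat.coprime_div_gcd_div_gcd (Nat.pos_of_ne_zero hd0)
  have ht1 : ¬ 2 ∣ t / d := by
    intro h2t
    have : 2 ∣ (n / d).gcd (t / d) := Nat.dvd_gcd hm h2t
    rw [hcop] at this
    omega
  have hdle : d ≤ t := Nat.le_of_dvd ht hdt
  have h2dtd : 2 * d ∣ t - d := by
    obtain ⟨t₁, ht₁⟩ := hdt
    have ht₁d : t / d = t₁ := by rw [ht₁]; exact Nat.mul_div_cancel_left t₁ (Nat.pos_of_ne_zero hd0)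
    rw [ht₁d] at ht1
    have : ∃ u, t₁ = 2 * u + 1 := ⟨t₁ / 2, by omega⟩
    obtain ⟨u, hu⟩ := this
    refine ⟨u, ?_⟩
    rw [ht₁, hu]
    ring_nf
    omega
  have hpertd : ((t - d : ℕ) : ZMod n) ∈ periods v :=
    natCast_mem_periods_of_dvd h2dtd hperG
  have hsplit : ((t : ℕ) : ZMod n) = ((d : ℕ) : ZMod n) + ((t - d : ℕ) : ZMod n) := by
    have he : (d + (t - d) : ℕ) = (t : ℕ) := by omega
    rw [← Nat.cast_add]
    exact congrArg _ he.symm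
  have e1 : Qs n ((t : ℕ) : ZMod n) v = ∑ i : ZMod n, v i * v (i + ((d : ℕ) : ZMod n)) := by
    simp only [Qs]
    refine Finset.sum_congr rfl fun i _ => ?_
    congr 1
    rw [hsplit, ← add_assoc]
    exact hpertd (i + ((d : ℕ) : ZMod n))
  rw [e1]
  refine sum_eq_zero_of_periodic hdn hd0 ?_ hm
  intro i
  show v (i + ↑d) * v (i + ↑d + ↑d) = v i * v (i + ↑d)
  have h3 : v (i + ↑d + ↑d) = v i := by
    have e2 : (i + (↑d : ZMod n) + ↑d) = i + ((2 * d : ℕ) : ZMod n) := by push_cast; ring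
    rw [e2]
    exact hperG i
  rw [h3, mul_comm]

lemma exists_Cset_one_of_odd {t : ℕ} (hm : ¬ 2 ∣ n / n.gcd t) :
    ∃ v, v ∈ Cset (Qs n ((t : ℕ) : ZMod n)) ∧ Qs n ((t : ℕ) : ZMod n) v = 1 := by
  classical
  set d := n.gcd t with hd
  have hdn : d ∣ n := Nat.gcd_dvd_left n t
  have hdt : d ∣ t := Nat.gcd_dvd_right n t
  set v : ZMod n → ZMod 2 :=
    fun i => if i ∈ AddSubgroup.zmultiples ((d : ℕ) : ZMod n) then 1 else 0 with hv
  have hv_inv : ∀ z ∈ AddSubgroup.zmultiples ((d : ℕ) : ZMod n), ∀ i, v (i + z) = v i := by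
    intro z hz i
    simp only [hv]
    congr 1
    simp [AddSubgroup.add_mem_cancel_right _ hz]
  have htH : ((t : ℕ) : ZMod n) ∈ AddSubgroup.zmultiples ((d : ℕ) : ZMod n) := by
    obtain ⟨t₁, ht₁⟩ := hdt
    rw [AddSubgroup.mem_zmultiples_iff]
    refine ⟨(t₁ : ℤ), ?_⟩
    rw [ht₁]
    push_cast
    rw [zsmul_eq_mul]
    push_cast
    ring
  refine ⟨v, ?_, ?_⟩
  · rw [mem_Cset_Qs]
    intro i
    rw [hv_inv _ htH i]
    have e : i - ((t : ℕ) : ZMod n) = i + (-((t : ℕ) : ZMod n)) := by ring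
    rw [e, hv_inv _ (neg_mem htH) i]
  · have e1 : Qs n ((t : ℕ) : ZMod n) v = ∑ i : ZMod n, v i := by
      simp only [Qs]
      refine Finset.sum_congr rfl fun i _ => ?_
      rw [hv_inv _ htH i, z2_mul_self]
    rw [e1]
    have e2 : (∑ i : ZMod n, v i)
        = ((Finset.univ.filter
            (fun i : ZMod n => i ∈ AddSubgroup.zmultiples ((d : ℕ) : ZMod n))).card : ZMod 2) := by
      simp only [hv]
      rw [Finset.sum_ite, Finset.sum_const, Finset.sum_const_zero, add_zero,
        nsmul_eq_mul, mul_one]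
    rw [e2]
    have e3 : (Finset.univ.filter
          (fun i : ZMod n => i ∈ AddSubgroup.zmultiples ((d : ℕ) : ZMod n))).card
        = Fintype.card (AddSubgroup.zmultiples ((d : ℕ) : ZMod n)) := by
      rw [Fintype.card_subtype]
    have e4 : Fintype.card (AddSubgroup.zmultiples ((d : ℕ) : ZMod n)) = n / d := by
      rw [Fintype.card_zmultiples, ZMod.addOrderOf_coe d (NeZero.ne n),
        Nat.gcd_eq_right hdn]
    rw [e3, e4]
    have e5 : (n / d) % 2 = 1 := by omega
    rw [← ZMod.natCast_mod (n / d) 2, e5, Nat.cast_one]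

lemma aff_surj {A : Matrix (ZMod n) (ZMod n) (ZMod 2)} (hA : IsUnit A)
    (b : ZMod n → ZMod 2) : ∀ y, ∃ x, A.mulVec x + b = y := by
  intro y
  refine ⟨(↑hA.unit⁻¹ : Matrix (ZMod n) (ZMod n) (ZMod 2)).mulVec (y - b), ?_⟩
  rw [Matrix.mulVec_mulVec]
  have h1 : A * (↑hA.unit⁻¹ : Matrix (ZMod n) (ZMod n) (ZMod 2)) = 1 := hA.mul_val_inv
  rw [h1, Matrix.one_mulVec, sub_add_cancel]

lemma inv_mulVec_mulVec {A : Matrix (ZMod n) (ZMod n) (ZMod 2)} (hA : IsUnit A)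
    (v : ZMod n → ZMod 2) :
    (↑hA.unit⁻¹ : Matrix (ZMod n) (ZMod n) (ZMod 2)).mulVec (A.mulVec v) = v := by
  rw [Matrix.mulVec_mulVec]
  have h1 : (↑hA.unit⁻¹ : Matrix (ZMod n) (ZMod n) (ZMod 2)) * A = 1 := hA.val_inv_mul
  rw [h1, Matrix.one_mulVec]

lemma mulVec_inv_mulVec {A : Matrix (ZMod n) (ZMod n) (ZMod 2)} (hA : IsUnit A)
    (v : ZMod n → ZMod 2) :
    A.mulVec ((↑hA.unit⁻¹ : Matrix (ZMod n) (ZMod n) (ZMod 2)).mulVec v) = v := by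
  rw [Matrix.mulVec_mulVec]
  have h1 : A * (↑hA.unit⁻¹ : Matrix (ZMod n) (ZMod n) (ZMod 2)) = 1 := hA.mul_val_inv
  rw [h1, Matrix.one_mulVec]

lemma card_Cset_affEquiv {f g : BF n} (h : affEquiv f g) :
    (Cset g).card = (Cset f).card := by
  obtain ⟨A, b, hA, hfg⟩ := h
  have hkey : ∀ z w : ZMod n → ZMod 2, A.mulVec z + b + A.mulVec w = A.mulVec (z + w) + b := by
    intro z w
    rw [Matrix.mulVec_add]
    ring
  refine Finset.card_nbij' (fun v => A.mulVec v)
    (fun w => (↑hA.unit⁻¹ : Matrix (ZMod n) (ZMod n) (ZMod 2)).mulVec w) ?_ ?_ ?_ ?_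
  · intro v hv
    rw [Finset.mem_coe, mem_Cset] at hv ⊢
    intro x y
    obtain ⟨x0, rfl⟩ := aff_surj hA b x
    obtain ⟨y0, rfl⟩ := aff_surj hA b y
    rw [hkey, hkey, ← hfg, ← hfg, ← hfg, ← hfg]
    exact hv x0 y0
  · intro w hw
    rw [Finset.mem_coe, mem_Cset] at hw ⊢
    intro x y
    rw [hfg, hfg, hfg, hfg]
    have h2 : ∀ z : ZMod n → ZMod 2,
        A.mulVec (z + (↑hA.unit⁻¹ : Matrix (ZMod n) (ZMod n) (ZMod 2)).mulVec w) + b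
          = (A.mulVec z + b) + w := by
      intro z
      rw [Matrix.mulVec_add, mulVec_inv_mulVec hA]
      ring
    rw [h2, h2]
    exact hw (A.mulVec x + b) (A.mulVec y + b)
  · intro v _
    exact inv_mulVec_mulVec hA v
  · intro w _
    exact mulVec_inv_mulVec hA w

lemma card_Zset_affEquiv {f g : BF n} (h : affEquiv f g) :
    (Zset g).card = (Zset f).card := by
  obtain ⟨A, b, hA, hfg⟩ := h
  refine Finset.card_nbij' (fun v => A.mulVec v)
    (fun w => (↑hA.unit⁻¹ : Matrix (ZMod n) (ZMod n) (ZMod 2)).mulVec w) ?_ ?_ ?_ ?_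
  · intro v hv
    rw [Finset.mem_coe, mem_Zset] at hv ⊢
    intro x
    obtain ⟨x0, rfl⟩ := aff_surj hA b x
    have hkey : A.mulVec x0 + b + A.mulVec v = A.mulVec (x0 + v) + b := by
      rw [Matrix.mulVec_add]; ring
    rw [hkey, ← hfg, ← hfg]
    exact hv x0
  · intro w hw
    rw [Finset.mem_coe, mem_Zset] at hw ⊢
    intro x
    rw [hfg, hfg]
    have h2 : A.mulVec (x + (↑hA.unit⁻¹ : Matrix (ZMod n) (ZMod n) (ZMod 2)).mulVec w) + b
        = (A.mulVec x + b) + w := by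
      rw [Matrix.mulVec_add, mulVec_inv_mulVec hA]
      ring
    rw [h2]
    exact hw (A.mulVec x + b)
  · intro v _
    exact inv_mulVec_mulVec hA v
  · intro w _
    exact mulVec_inv_mulVec hA w

lemma shortQuad_zero : shortQuad n 0 = 0 := by simp [shortQuad]

lemma sum_split_shortQuad (hn : Even n) (F : ZMod n → ZMod 2) :
    ∑ j : ZMod n, F j
      = ∑ i ∈ Finset.range (n / 2),
          (F ((i : ℕ) : ZMod n) + F (((i : ℕ) : ZMod n) + ((n / 2 : ℕ) : ZMod n))) := by
  obtain ⟨m, hnm⟩ := hn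
  have hn2 : n / 2 = m := by omega
  have hsub : n - n / 2 = n / 2 := by omega
  rw [sum_zmod_eq_sum_range, Finset.range_eq_Ico,
    ← Finset.sum_Ico_consecutive (fun i => F ((i : ℕ) : ZMod n))
      (Nat.zero_le (n / 2)) (Nat.div_le_self n 2),
    Finset.sum_Ico_eq_sum_range (fun i => F ((i : ℕ) : ZMod n)) (n / 2) n,
    hsub, ← Finset.range_eq_Ico, ← Finset.sum_add_distrib]
  refine Finset.sum_congr rfl fun i _ => ?_
  congr 1
  congr 1
  push_cast
  ring

lemma shortQuad_deriv (hn : Even n) (x v : ZMod n → ZMod 2) :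
    shortQuad n (x + v) + shortQuad n x
      = (∑ j : ZMod n, x j * v (j + ((n / 2 : ℕ) : ZMod n))) + shortQuad n v := by
  have hhh : ((n / 2 : ℕ) : ZMod n) + ((n / 2 : ℕ) : ZMod n) = 0 := by
    obtain ⟨m, hnm⟩ := hn
    have hn2 : n / 2 + n / 2 = n := by omega
    rw [← Nat.cast_add, hn2, ZMod.natCast_self]
  have e1 : shortQuad n (x + v)
      = shortQuad n x
        + ((∑ i ∈ Finset.range (n / 2),
            (x ((i : ℕ) : ZMod n) * v (((i : ℕ) : ZMod n) + ((n / 2 : ℕ) : ZMod n))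
              + v ((i : ℕ) : ZMod n) * x (((i : ℕ) : ZMod n) + ((n / 2 : ℕ) : ZMod n))))
          + shortQuad n v) := by
    simp only [shortQuad, Pi.add_apply]
    rw [← Finset.sum_add_distrib, ← Finset.sum_add_distrib]
    exact Finset.sum_congr rfl fun i _ => by ring
  have e2 : (∑ i ∈ Finset.range (n / 2),
      (x ((i : ℕ) : ZMod n) * v (((i : ℕ) : ZMod n) + ((n / 2 : ℕ) : ZMod n))
        + v ((i : ℕ) : ZMod n) * x (((i : ℕ) : ZMod n) + ((n / 2 : ℕ) : ZMod n))))
      = ∑ j : ZMod n, x j * v (j + ((n / 2 : ℕ) : ZMod n)) := by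
    rw [sum_split_shortQuad hn (fun j => x j * v (j + ((n / 2 : ℕ) : ZMod n)))]
    refine Finset.sum_congr rfl fun i _ => ?_
    rw [add_assoc, hhh, add_zero]
    ring
  rw [e1, e2]
  have hrest : ∀ a b c : ZMod 2, (a + (b + c)) + a = b + c := by decide
  rw [hrest]

lemma Cset_shortQuad_eq_zero (hn : Even n) {v : ZMod n → ZMod 2}
    (hv : v ∈ Cset (shortQuad n)) : v = 0 := by
  have hlin : ∀ x : ZMod n → ZMod 2, (∑ j : ZMod n, x j * v (j + ((n / 2 : ℕ) : ZMod n))) = 0 := by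
    intro x
    have h2 := (mem_Cset.mp hv) x 0
    rw [zero_add, shortQuad_zero, add_zero] at h2
    have h3 := (shortQuad_deriv hn x v).symm.trans h2
    exact add_eq_right.mp h3
  have hvz : ∀ k : ZMod n, v (k + ((n / 2 : ℕ) : ZMod n)) = 0 := by
    intro k
    have h3 := hlin (Pi.single k 1)
    rw [Finset.sum_eq_single k] at h3
    · rwa [Pi.single_eq_same, one_mul] at h3
    · intro i _ hik
      rw [Pi.single_eq_of_ne hik, zero_mul]
    · intro habs
      exact absurd (Finset.mem_univ k) habs
  funext j
  have := hvz (j - ((n / 2 : ℕ) : ZMod n))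
  rwa [sub_add_cancel] at this

lemma one_lt_card_Cset_Qs (s : ZMod n) : 1 < (Cset (Qs n s)).card := by
  refine Finset.one_lt_card.mpr ⟨0, ?_, (fun _ => 1), ?_, ?_⟩
  · rw [mem_Cset_Qs]
    intro i
    rfl
  · rw [mem_Cset_Qs]
    intro i
    rfl
  · intro hcontra
    have := congrFun hcontra 0
    simp only [Pi.zero_apply] at this
    exact absurd this (by decide)

lemma exists_unit_mul {t t' : ℕ} (hgcd : n.gcd t = n.gcd t') :
    ∃ c : (ZMod n)ˣ, (c : ZMod n) * ((t : ℕ) : ZMod n) = ((t' : ℕ) : ZMod n) := by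
  set d := n.gcd t with hd
  have hnpos : 0 < n := Nat.pos_of_ne_zero (NeZero.ne n)
  have hd0 : 0 < d := Nat.gcd_pos_of_pos_left t hnpos
  have hdn : d ∣ n := Nat.gcd_dvd_left n t
  have hdt : d ∣ t := Nat.gcd_dvd_right n t
  have hdt' : d ∣ t' := hgcd ▸ Nat.gcd_dvd_right n t'
  have hmn : n / d ∣ n := Nat.div_dvd_of_dvd hdn
  haveI : NeZero (n / d) := ⟨(Nat.div_pos (Nat.le_of_dvd hnpos hdn) hd0).ne'⟩
  have hcop : (t / d).Coprime (n / d) := (Nat.coprime_div_gcd_div_gcd hd0).symm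
  have hcop' : (t' / d).Coprime (n / d) := by
    have h2 : 0 < n.gcd t' := hgcd ▸ hd0
    have h3 := (Nat.coprime_div_gcd_div_gcd h2).symm
    rw [← hgcd] at h3
    exact h3
  set u₁ : (ZMod (n / d))ˣ := ZMod.unitOfCoprime (t / d) hcop with hu₁
  set u₂ : (ZMod (n / d))ˣ := ZMod.unitOfCoprime (t' / d) hcop' with hu₂
  obtain ⟨c, hc⟩ := ZMod.unitsMap_surjective hmn (u₂ * u₁⁻¹)
  refine ⟨c, ?_⟩
  have hc' : (ZMod.castHom hmn (ZMod (n / d))) ((c : ZMod n)) = ((u₂ * u₁⁻¹ : (ZMod (n / d))ˣ) : ZMod (n / d)) := by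
    have := congrArg Units.val hc
    simpa [ZMod.unitsMap] using this
  have h1 : ((u₂ * u₁⁻¹ : (ZMod (n / d))ˣ) : ZMod (n / d)) * ((t / d : ℕ) : ZMod (n / d))
      = ((t' / d : ℕ) : ZMod (n / d)) := by
    rw [← ZMod.coe_unitOfCoprime (t / d) hcop, ← hu₁,
      ← ZMod.coe_unitOfCoprime (t' / d) hcop', ← hu₂]
    rw [Units.val_mul, mul_assoc, Units.inv_mul, mul_one]
  have h2 : (((c : ZMod n).val * (t / d) : ℕ) : ZMod (n / d)) = ((t' / d : ℕ) : ZMod (n / d)) := by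
    have h3 : (((c : ZMod n).val : ℕ) : ZMod (n / d)) = (ZMod.castHom hmn (ZMod (n / d))) ((c : ZMod n)) := by
      rw [ZMod.castHom_apply, ZMod.natCast_val]
    push_cast
    rw [h3, hc']
    exact h1
  have h4 : ((c : ZMod n).val * (t / d)) ≡ (t' / d) [MOD n / d] :=
    (ZMod.natCast_eq_natCast_iff _ _ _).mp h2
  have h5 : d * ((c : ZMod n).val * (t / d)) ≡ d * (t' / d) [MOD d * (n / d)] :=
    Nat.ModEq.mul_left' d h4
  have e1 : d * (n / d) = n := Nat.mul_div_cancel' hdn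
  have e2 : d * (t' / d) = t' := Nat.mul_div_cancel' hdt'
  have e3 : d * ((c : ZMod n).val * (t / d)) = (c : ZMod n).val * t := by
    rw [show d * ((c : ZMod n).val * (t / d)) = (c : ZMod n).val * (d * (t / d)) by ring,
      Nat.mul_div_cancel' hdt]
  rw [e1, e2, e3] at h5
  have h6 : (((c : ZMod n).val * t : ℕ) : ZMod n) = ((t' : ℕ) : ZMod n) :=
    (ZMod.natCast_eq_natCast_iff _ _ _).mpr h5
  push_cast at h6
  rwa [ZMod.natCast_val, ZMod.cast_id] at h6

def mulPerm (c : (ZMod n)ˣ) : Equiv.Perm (ZMod n) where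
  toFun := fun i => (c : ZMod n) * i
  invFun := fun i => ((c⁻¹ : (ZMod n)ˣ) : ZMod n) * i
  left_inv := fun i => by
    show ((c⁻¹ : (ZMod n)ˣ) : ZMod n) * ((c : ZMod n) * i) = i
    rw [← mul_assoc, Units.inv_mul, one_mul]
  right_inv := fun i => by
    show (c : ZMod n) * (((c⁻¹ : (ZMod n)ˣ) : ZMod n) * i) = i
    rw [← mul_assoc, Units.mul_inv, one_mul]

lemma Qs_mulPerm (c : (ZMod n)ˣ) (s : ZMod n) (x : ZMod n → ZMod 2) :
    Qs n ((c : ZMod n) * s) x = Qs n s (fun i => x (mulPerm c i)) := by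
  simp only [Qs]
  rw [← Equiv.sum_comp (mulPerm c) (fun j => x j * x (j + (c : ZMod n) * s))]
  refine Finset.sum_congr rfl fun i _ => ?_
  show x (mulPerm c i) * x (mulPerm c i + (c : ZMod n) * s)
      = x (mulPerm c i) * x (mulPerm c (i + s))
  congr 1
  show x ((c : ZMod n) * i + (c : ZMod n) * s) = x ((c : ZMod n) * (i + s))
  rw [mul_add]

end MRSAux

/-- If two quadratic MRS functions in `n` variables are affine equivalent, then there is a
permutation `ξ` of the variables giving the equivalence: `g x = f (x ∘ ξ)`. -/
theorem quadMRS_affEquiv_implies_perm_equiv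
    (n : ℕ) [NeZero n] (f g : BF n)
    (hf : IsQuadMRS n f) (hg : IsQuadMRS n g) (h : affEquiv f g) :
    ∃ ξ : Equiv.Perm (ZMod n), ∀ x, g x = f (fun i => x (ξ i)) := by
  classical
  rcases hf with ⟨j, hj2, hjle, rfl⟩ | ⟨hev, rfl⟩
  · rcases hg with ⟨j', hj2', hjle', rfl⟩ | ⟨hev', rfl⟩
    · -- both proper quadratic MRS
      set t := j - 1 with htdef
      set t' := j' - 1 with htdef'
      have hfQ : quadMRS n j = MRSAux.Qs n ((t : ℕ) : ZMod n) := rfl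
      have hgQ : quadMRS n j' = MRSAux.Qs n ((t' : ℕ) : ZMod n) := rfl
      have ht1 : 1 ≤ t := by omega
      have ht1' : 1 ≤ t' := by omega
      have hCC := MRSAux.card_Cset_affEquiv h
      have hZZ := MRSAux.card_Zset_affEquiv h
      rw [hfQ, hgQ] at hCC hZZ
      have hgcd2 : n.gcd (2 * t') = n.gcd (2 * t) := by
        have h2 := hCC
        rw [MRSAux.card_Cset_Qs t', MRSAux.card_Cset_Qs t] at h2
        exact Nat.pow_right_injective (le_refl 2) h2
      have hpar : (2 ∣ n / n.gcd t) ↔ (2 ∣ n / n.gcd t') := by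
        constructor
        · intro hevt
          by_contra hoddt'
          have hZCf : MRSAux.Zset (MRSAux.Qs n ((t : ℕ) : ZMod n))
              = MRSAux.Cset (MRSAux.Qs n ((t : ℕ) : ZMod n)) := by
            refine Finset.Subset.antisymm MRSAux.Zset_subset_Cset ?_
            intro v hv
            rw [MRSAux.mem_Zset_iff_Qs]
            exact ⟨hv, MRSAux.Qs_apply_eq_zero_of_even ht1 hevt hv⟩
          obtain ⟨v₀, hv₀C, hv₀1⟩ := MRSAux.exists_Cset_one_of_odd (n := n) (t := t') hoddt'
          have hv₀Z : v₀ ∉ MRSAux.Zset (MRSAux.Qs n ((t' : ℕ) : ZMod n)) := by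
            intro hZ
            have h3 := (MRSAux.mem_Zset_iff_Qs.mp hZ).2
            rw [hv₀1] at h3
            exact one_ne_zero h3
          have hlt : (MRSAux.Zset (MRSAux.Qs n ((t' : ℕ) : ZMod n))).card
              < (MRSAux.Cset (MRSAux.Qs n ((t' : ℕ) : ZMod n))).card :=
            Finset.card_lt_card ⟨MRSAux.Zset_subset_Cset, fun hsub => hv₀Z (hsub hv₀C)⟩
          rw [hZZ, hZCf, ← hCC] at hlt
          omega
        · intro hevt'
          by_contra hoddt
          have hZCg : MRSAux.Zset (MRSAux.Qs n ((t' : ℕ) : ZMod n))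
              = MRSAux.Cset (MRSAux.Qs n ((t' : ℕ) : ZMod n)) := by
            refine Finset.Subset.antisymm MRSAux.Zset_subset_Cset ?_
            intro v hv
            rw [MRSAux.mem_Zset_iff_Qs]
            exact ⟨hv, MRSAux.Qs_apply_eq_zero_of_even ht1' hevt' hv⟩
          obtain ⟨v₀, hv₀C, hv₀1⟩ := MRSAux.exists_Cset_one_of_odd (n := n) (t := t) hoddt
          have hv₀Z : v₀ ∉ MRSAux.Zset (MRSAux.Qs n ((t : ℕ) : ZMod n)) := by
            intro hZ
            have h3 := (MRSAux.mem_Zset_iff_Qs.mp hZ).2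
            rw [hv₀1] at h3
            exact one_ne_zero h3
          have hlt : (MRSAux.Zset (MRSAux.Qs n ((t : ℕ) : ZMod n))).card
              < (MRSAux.Cset (MRSAux.Qs n ((t : ℕ) : ZMod n))).card :=
            Finset.card_lt_card ⟨MRSAux.Zset_subset_Cset, fun hsub => hv₀Z (hsub hv₀C)⟩
          rw [← hZZ, hZCg, hCC] at hlt
          omega
      have hd : n.gcd t = n.gcd t' := by
        by_cases hevt : 2 ∣ n / n.gcd t
        · have hevt' := hpar.mp hevt
          have e1 := MRSAux.gcd_two_mul_of_even (n := n) (t := t) hevt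
          have e2 := MRSAux.gcd_two_mul_of_even (n := n) (t := t') hevt'
          omega
        · have hoddt' := fun h2 => hevt (hpar.mpr h2)
          have e1 := MRSAux.gcd_two_mul_of_odd (n := n) (t := t) hevt
          have e2 := MRSAux.gcd_two_mul_of_odd (n := n) (t := t') hoddt'
          omega
      obtain ⟨c, hc⟩ := MRSAux.exists_unit_mul (n := n) hd
      refine ⟨MRSAux.mulPerm c, ?_⟩
      intro x
      rw [hfQ, hgQ, ← hc, MRSAux.Qs_mulPerm]
    · -- f proper quad, g short : impossible
      exfalso
      have hfQ : quadMRS n j = MRSAux.Qs n (((j - 1 : ℕ) : ℕ) : ZMod n) := rfl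
      have hCC := MRSAux.card_Cset_affEquiv h
      rw [hfQ] at hCC
      have h1 : (MRSAux.Cset (shortQuad n)).card ≤ 1 :=
        Finset.card_le_one.mpr fun a ha b hb => by
          rw [MRSAux.Cset_shortQuad_eq_zero hev' ha, MRSAux.Cset_shortQuad_eq_zero hev' hb]
      have h2 := MRSAux.one_lt_card_Cset_Qs (n := n) (((j - 1 : ℕ) : ℕ) : ZMod n)
      omega
  · rcases hg with ⟨j', hj2', hjle', rfl⟩ | ⟨hev', rfl⟩
    · -- f short, g proper quad : impossible
      exfalso
      have hgQ : quadMRS n j' = MRSAux.Qs n (((j' - 1 : ℕ) : ℕ) : ZMod n) := rfl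
      have hCC := MRSAux.card_Cset_affEquiv h
      rw [hgQ] at hCC
      have h1 : (MRSAux.Cset (shortQuad n)).card ≤ 1 :=
        Finset.card_le_one.mpr fun a ha b hb => by
          rw [MRSAux.Cset_shortQuad_eq_zero hev ha, MRSAux.Cset_shortQuad_eq_zero hev hb]
      have h2 := MRSAux.one_lt_card_Cset_Qs (n := n) (((j' - 1 : ℕ) : ℕ) : ZMod n)
      omega
    · exact ⟨Equiv.refl _, fun x => rfl⟩
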